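/- Let k = ±1, g(z₁, z₂) = z₂ + z₁·exp(2i·z₂), c = (0, -π/2), and f(z₁, z₂) = exp(-i·g(z₁, z₂ + π/2)). Then, with f̄(z₁,z₂) = f(z₁, z₂ - π/2), for all (z₁, z₂) ∈ ℂ²: ((1/2)·(∂f/∂z₁)(z₁,z₂) - i·z₂·f̄(z₁,z₂))² + (-(ki/2)·(∂f/∂z₁)(z₁,z₂) + k·z₂·f̄(z₁,z₂))² = -2i·z₂. -/

import Mathlib

open Complex

theorem stmt_12 (k : ℂ) (hk : k = 1 ∨ k = -1)
    (g : ℂ × ℂ → ℂ)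
    (hg : ∀ z₁ z₂ : ℂ, g (z₁, z₂) = z₂ + z₁ * exp (2 * I * z₂))
    (f : ℂ × ℂ → ℂ)
    (hf : ∀ z₁ z₂ : ℂ, f (z₁, z₂) = exp (-(I * g (z₁, z₂ + (Real.pi : ℂ) / 2)))) :
    ∀ z₁ z₂ : ℂ,
      ((1 / 2) * deriv (fun w => f (w, z₂)) z₁
        - I * z₂ * f (z₁, z₂ - (Real.pi : ℂ) / 2)) ^ 2
      + (-(k * I / 2) * deriv (fun w => f (w, z₂)) z₁
        + k * z₂ * f (z₁, z₂ - (Real.pi : ℂ) / 2)) ^ 2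
      = -2 * I * z₂ := by
  intro z₁ z₂
  set π : ℂ := (Real.pi : ℂ) with hπ
  have key : ∀ a b : ℂ, f (a, b) =
      exp (-(I * (b + π / 2 + a * exp (2 * I * (b + π / 2))))) := by
    intro a b; rw [hf, hg]
  set E : ℂ := exp (2 * I * (z₂ + π / 2)) with hE
  -- derivative
  have hder : HasDerivAt (fun w => f (w, z₂))
      (exp (-(I * (z₂ + π / 2 + z₁ * E))) * -(I * E)) z₁ := by
    have h1 : HasDerivAt (fun w : ℂ => -(I * (z₂ + π / 2 + w * E))) (-(I * E)) z₁ := by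
      have := (((hasDerivAt_id z₁).mul_const E).const_add (z₂ + π / 2)).const_mul I
      simpa [Pi.neg_def] using this.neg
    have h2 := h1.cexp
    have heq : (fun w : ℂ => exp (-(I * (z₂ + π / 2 + w * E)))) = fun w => f (w, z₂) := by
      funext w; rw [key]
    rw [heq] at h2
    exact h2
  have hA : deriv (fun w => f (w, z₂)) z₁ = exp (-(I * (z₂ + π / 2 + z₁ * E))) * -(I * E) :=
    hder.deriv
  set A : ℂ := exp (-(I * (z₂ + π / 2 + z₁ * E))) * -(I * E) with hAdef
  set B : ℂ := f (z₁, z₂ - π / 2) with hBdef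
  have hBval : B = exp (-(I * (z₂ + z₁ * exp (2 * I * z₂)))) := by
    rw [hBdef, key]
    ring_nf
  have hEval : E = -exp (2 * I * z₂) := by
    rw [hE]
    have : 2 * I * (z₂ + π / 2) = 2 * I * z₂ + π * I := by ring
    rw [this, Complex.exp_add, hπ, Complex.exp_pi_mul_I]
    ring
  have hAB : A * B = 1 := by
    rw [hAdef, hBval, hEval]
    have hpi2 : exp (-(I * π / 2)) = -I := by
      have h : exp (I * π / 2) = I := by
        have hc : (π : ℂ) / 2 = ((Real.pi / 2 : ℝ) : ℂ) := by rw [hπ]; push_cast; ring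
        rw [show I * π / 2 = π / 2 * I by ring, hc, Complex.exp_mul_I,
          ← Complex.ofReal_cos, ← Complex.ofReal_sin, Real.cos_pi_div_two,
          Real.sin_pi_div_two]
        simp
      rw [show -(I * π / 2) = -(I * π / 2) from rfl, Complex.exp_neg]
      rw [show I * π / 2 = I * π / 2 from rfl] at h
      rw [h, Complex.inv_I]
    have h1 : exp (-(I * (z₂ + π / 2 + z₁ * -exp (2 * I * z₂)))) *
        exp (-(I * (z₂ + z₁ * exp (2 * I * z₂)))) = exp (-(2 * I * z₂)) * exp (-(I * π / 2)) := by
      rw [← Complex.exp_add, ← Complex.exp_add]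
      ring_nf
    have h2 : exp (-(2 * I * z₂)) * exp (2 * I * z₂) = 1 := by
      rw [← Complex.exp_add]; simp
    calc exp (-(I * (z₂ + π / 2 + z₁ * -exp (2 * I * z₂)))) * -(I * -exp (2 * I * z₂)) *
            exp (-(I * (z₂ + z₁ * exp (2 * I * z₂))))
        = (exp (-(I * (z₂ + π / 2 + z₁ * -exp (2 * I * z₂)))) *
            exp (-(I * (z₂ + z₁ * exp (2 * I * z₂))))) * (I * exp (2 * I * z₂)) := by ring
      _ = exp (-(2 * I * z₂)) * exp (-(I * π / 2)) * (I * exp (2 * I * z₂)) := by rw [h1]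
      _ = exp (-(2 * I * z₂)) * (-I) * (I * exp (2 * I * z₂)) := by rw [hpi2]
      _ = 1 := by
          linear_combination (-(exp (-(2 * I * z₂)) * exp (2 * I * z₂))) * Complex.I_sq + h2
  rw [hA]
  rcases hk with h | h <;> subst h <;>
    linear_combination (A ^ 2 / 4 + z₂ ^ 2 * B ^ 2) * Complex.I_sq + (-2 * I * z₂) * hAB
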